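/- Let p > 2 and let u : ℝ → ℝ be a 2π-periodic C¹ function which is not identically zero. Let ū_p := (∫₀^{2π}|u(x)|^{p−2}u(x) dx) / (∫₀^{2π}|u(x)|^{p−2} dx). Then ‖u'‖_p² · ‖u‖_p^{p−2} ≥ λ₁ · (1/(2π))∫₀^{2π} |u(x)|^{p−2} (u(x) − ū_p)² dx. -/

import Mathlib

open MeasureTheory Real

/-- The L^r norm on the circle with the uniform probability measure dσ = dx/(2π),
for a 2π-periodic function `u : ℝ → ℝ`. -/
noncomputable def perNorm (r : ℝ) (u : ℝ → ℝ) : ℝ :=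
  ((1 / (2 * π)) * ∫ x in (0:ℝ)..(2 * π), |u x| ^ r) ^ (1 / r)

/-- `u` is 2π-periodic and C¹. -/
def PeriodicC1 (u : ℝ → ℝ) : Prop :=
  Function.Periodic u (2 * π) ∧ ContDiff ℝ 1 u

/-- λ₁ = inf ‖v'‖_p²/‖v‖_p² over 2π-periodic C¹ functions v ≢ 0 with ∫₀^{2π} v dx = 0. -/
noncomputable def lambdaOne (p : ℝ) : ℝ :=
  sInf { l : ℝ | ∃ v : ℝ → ℝ, PeriodicC1 v ∧ v ≠ 0 ∧
    (∫ x in (0:ℝ)..(2 * π), v x) = 0 ∧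
    l = (perNorm p (deriv v)) ^ 2 / (perNorm p v) ^ 2 }

/-- λ₁* = inf ‖v'‖_p²/‖v‖_2² over 2π-periodic C¹ functions v ≢ 0 with ∫₀^{2π} v dx = 0. -/
noncomputable def lambdaOneStar (p : ℝ) : ℝ :=
  sInf { l : ℝ | ∃ v : ℝ → ℝ, PeriodicC1 v ∧ v ≠ 0 ∧
    (∫ x in (0:ℝ)..(2 * π), v x) = 0 ∧
    l = (perNorm p (deriv v)) ^ 2 / (perNorm 2 v) ^ 2 }

/-- The p-Laplacian L_p u = (|u'|^{p-2} u')'. -/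
noncomputable def pLap (p : ℝ) (u : ℝ → ℝ) : ℝ → ℝ :=
  deriv (fun x => |deriv u x| ^ (p - 2) * deriv u x)


section helpers
open Set ENNReal


/-- Positivity of the integral of a nonneg continuous periodic function positive somewhere. -/
lemma per_int_pos {g : ℝ → ℝ} (hg : Continuous g) (hnn : ∀ x, 0 ≤ g x)
    (hper : Function.Periodic g (2 * π)) (hx : ∃ x, 0 < g x) :
    0 < ∫ x in (0:ℝ)..(2 * π), g x := by
  have h2π : (0:ℝ) < 2 * π := by positivity
  obtain ⟨x₀, hx₀⟩ := hx
  set y := toIcoMod h2π 0 x₀ with hy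
  have hyg : g y = g x₀ := by
    rw [hy, toIcoMod]
    exact hper.sub_zsmul_eq _
  have hymem : y ∈ Ico (0:ℝ) (2 * π) := by
    simpa using toIcoMod_mem_Ico' h2π x₀
  have hU : IsOpen {x : ℝ | 0 < g x} := isOpen_lt continuous_const hg
  -- find a point in the open interval where g is positive
  have hx₂ : ∃ x₂ ∈ Ioo (0:ℝ) (2 * π), 0 < g x₂ := by
    rcases eq_or_lt_of_le hymem.1 with h0 | h0
    · -- y = 0
      have hU0 : {x : ℝ | 0 < g x} ∈ nhdsWithin (0:ℝ) (Ioi 0) :=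
        nhdsWithin_le_nhds (hU.mem_nhds (by
          show 0 < g 0
          have : g 0 = g x₀ := by rw [show (0:ℝ) = y from h0]; exact hyg
          rw [this]; exact hx₀))
      have hI : Ioo (0:ℝ) (2 * π) ∈ nhdsWithin (0:ℝ) (Ioi 0) :=
        Ioo_mem_nhdsGT_of_mem ⟨le_refl _, h2π⟩
      obtain ⟨x₂, hx₂⟩ := Filter.nonempty_of_mem (Filter.inter_mem hU0 hI)
      exact ⟨x₂, hx₂.2, hx₂.1⟩
    · exact ⟨y, ⟨h0, hymem.2⟩, by rw [hyg]; exact hx₀⟩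
  obtain ⟨x₂, hx₂mem, hx₂pos⟩ := hx₂
  have hopen : IsOpen ({x : ℝ | 0 < g x} ∩ Ioo 0 (2 * π)) := hU.inter isOpen_Ioo
  obtain ⟨ε, hε, hball⟩ := Metric.isOpen_iff.1 hopen x₂ ⟨hx₂pos, hx₂mem⟩
  have hsub : Ioo (x₂ - ε / 2) (x₂ + ε / 2) ⊆ {x : ℝ | 0 < g x} ∩ Ioo 0 (2 * π) := by
    intro x hx
    apply hball
    rw [Real.ball_eq_Ioo]
    exact ⟨by linarith [hx.1], by linarith [hx.2]⟩
  have ha : x₂ - ε / 2 ∈ Metric.ball x₂ ε := by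
    rw [Real.ball_eq_Ioo]; constructor <;> linarith
  have hb : x₂ + ε / 2 ∈ Metric.ball x₂ ε := by
    rw [Real.ball_eq_Ioo]; constructor <;> linarith
  have ha' := (hball ha).2
  have hb' := (hball hb).2
  have hpos : 0 < ∫ x in (x₂ - ε / 2)..(x₂ + ε / 2), g x :=
    intervalIntegral.intervalIntegral_pos_of_pos_on (hg.intervalIntegrable _ _)
      (fun x hx => (hsub hx).1) (by linarith)
  calc 0 < ∫ x in (x₂ - ε / 2)..(x₂ + ε / 2), g x := hpos
    _ ≤ ∫ x in (0:ℝ)..(2 * π), g x := by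
        refine intervalIntegral.integral_mono_interval (le_of_lt ha'.1) (by linarith)
          (le_of_lt hb'.2) (Filter.Eventually.of_forall fun x => hnn x)
          (hg.intervalIntegrable _ _)

lemma memLp_Ioc (f : ℝ → ℝ) (hf : Continuous f) (q : ℝ≥0∞) :
    MemLp f q (volume.restrict (Set.Ioc (0:ℝ) (2 * π))) := by
  haveI : IsFiniteMeasure (volume.restrict (Set.Ioc (0:ℝ) (2 * π))) := by
    constructor
    rw [Measure.restrict_apply MeasurableSet.univ, Set.univ_inter, Real.volume_Ioc]
    exact ENNReal.ofReal_lt_top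
  obtain ⟨C, hC⟩ := (isCompact_Icc (a := (0:ℝ)) (b := 2 * π)).exists_bound_of_continuousOn
    hf.continuousOn
  refine MemLp.mono_exponent (q := ⊤) ?_ le_top
  apply memLp_top_of_bound hf.aestronglyMeasurable C
  filter_upwards [ae_restrict_mem measurableSet_Ioc] with x hx
  exact hC x (Set.Ioc_subset_Icc_self hx)

lemma holder_step (p : ℝ) (hp : 2 < p) (f g : ℝ → ℝ) (hf : Continuous f) (hg : Continuous g) :
    (1 / (2 * π)) * ∫ x in (0:ℝ)..(2 * π), |f x| ^ (p - 2) * (g x) ^ 2 ≤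
      ((1 / (2 * π)) * ∫ x in (0:ℝ)..(2 * π), |f x| ^ p) ^ ((p - 2) / p) *
      ((1 / (2 * π)) * ∫ x in (0:ℝ)..(2 * π), |g x| ^ p) ^ (2 / p) := by
  have h2π : (0:ℝ) < 2 * π := by positivity
  have hp2 : (0:ℝ) < p - 2 := by linarith
  have hp0 : (0:ℝ) < p := by linarith
  set μ := volume.restrict (Set.Ioc (0:ℝ) (2 * π)) with hμ
  have hPQ : Real.HolderConjugate (p / (p - 2)) (p / 2) := by
    rw [Real.holderConjugate_iff]
    constructor
    · rw [lt_div_iff₀ hp2]; linarith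
    · rw [inv_div, inv_div]; field_simp; ring
  have hFc : Continuous fun x => |f x| ^ (p - 2) :=
    hf.abs.rpow_const fun x => Or.inr hp2.le
  have hGc : Continuous fun x => (g x) ^ 2 := hg.pow 2
  have key := integral_mul_le_Lp_mul_Lq_of_nonneg (μ := μ) hPQ
    (f := fun x => |f x| ^ (p - 2)) (g := fun x => (g x) ^ 2)
    (Filter.Eventually.of_forall fun x => rpow_nonneg (abs_nonneg _) _)
    (Filter.Eventually.of_forall fun x => sq_nonneg _)
    (memLp_Ioc _ hFc _) (memLp_Ioc _ hGc _)
  have e1 : ∀ a : ℝ, (|f a| ^ (p - 2)) ^ (p / (p - 2)) = |f a| ^ p := fun a => by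
    rw [← Real.rpow_mul (abs_nonneg _)]
    congr 1
    field_simp
  have e2 : ∀ a : ℝ, ((g a) ^ 2) ^ (p / 2) = |g a| ^ p := fun a => by
    rw [← sq_abs, ← Real.rpow_natCast |g a| 2, ← Real.rpow_mul (abs_nonneg _)]
    congr 1
    push_cast
    ring
  simp only [e1, e2, one_div_div] at key
  -- key : ∫ a, |f a|^(p-2) * g a ^ 2 ∂μ ≤ (∫ a, |f a|^p ∂μ)^((p-2)/p) * (∫ a, |g a|^p ∂μ)^(2/p)
  rw [intervalIntegral.integral_of_le h2π.le, intervalIntegral.integral_of_le h2π.le,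
    intervalIntegral.integral_of_le h2π.le]
  have hA : 0 ≤ ∫ a, |f a| ^ p ∂μ :=
    integral_nonneg fun a => rpow_nonneg (abs_nonneg _) _
  have hB : 0 ≤ ∫ a, |g a| ^ p ∂μ :=
    integral_nonneg fun a => rpow_nonneg (abs_nonneg _) _
  have hc : (0:ℝ) < 1 / (2 * π) := by positivity
  calc (1 / (2 * π)) * ∫ a, |f a| ^ (p - 2) * (g a) ^ 2 ∂μ
      ≤ (1 / (2 * π)) * ((∫ a, |f a| ^ p ∂μ) ^ ((p - 2) / p) * (∫ a, |g a| ^ p ∂μ) ^ (2 / p)) :=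
        mul_le_mul_of_nonneg_left key hc.le
    _ = ((1 / (2 * π)) * ∫ a, |f a| ^ p ∂μ) ^ ((p - 2) / p) *
        ((1 / (2 * π)) * ∫ a, |g a| ^ p ∂μ) ^ (2 / p) := by
        have h1 : (1 / (2 * π) : ℝ) ^ ((p - 2) / p) * (1 / (2 * π) : ℝ) ^ (2 / p) = 1 / (2 * π) := by
          rw [← Real.rpow_add hc]
          have : (p - 2) / p + 2 / p = 1 := by field_simp; ring
          rw [this, Real.rpow_one]
        rw [Real.mul_rpow hc.le hA, Real.mul_rpow hc.le hB, mul_mul_mul_comm, h1]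

end helpers

/-- the weighted Poincaré inequality (A.5) with the weighted average ū_p. -/
theorem weighted_poincare (p : ℝ) (hp : 2 < p)
    (u : ℝ → ℝ) (hu : PeriodicC1 u) (hu0 : u ≠ 0)
    (ubar : ℝ)
    (hubar : ubar = (∫ x in (0:ℝ)..(2 * π), |u x| ^ (p - 2) * u x) /
      (∫ x in (0:ℝ)..(2 * π), |u x| ^ (p - 2))) :
    (perNorm p (deriv u)) ^ 2 * (perNorm p u) ^ (p - 2) ≥
      lambdaOne p *
        ((1 / (2 * π)) * ∫ x in (0:ℝ)..(2 * π), |u x| ^ (p - 2) * (u x - ubar) ^ 2) := by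
  have h2π : (0:ℝ) < 2 * π := by positivity
  have hp2 : (0:ℝ) < p - 2 := by linarith
  have hp0 : (0:ℝ) < p := by linarith
  obtain ⟨huper, huC1⟩ := hu
  have hucont : Continuous u := huC1.continuous
  have hwcont : Continuous fun x => |u x| ^ (p - 2) :=
    hucont.abs.rpow_const fun x => Or.inr hp2.le
  have hwnn : ∀ x, (0:ℝ) ≤ |u x| ^ (p - 2) := fun x => rpow_nonneg (abs_nonneg _) _
  have hwper : Function.Periodic (fun x => |u x| ^ (p - 2)) (2 * π) := fun x => by
    simp only [huper x]
  have hl0 : 0 ≤ lambdaOne p := by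
    apply Real.sInf_nonneg
    rintro l ⟨v, -, -, -, rfl⟩
    positivity
  -- the unweighted average
  set c : ℝ := (∫ x in (0:ℝ)..(2 * π), u x) / (2 * π) with hc
  by_cases hconst : ∀ x, u x = c
  · -- u is constant
    have hueq : u = fun _ => c := funext hconst
    have hc0 : c ≠ 0 := by
      intro h
      exact hu0 (by rw [hueq, h]; rfl)
    have hder : deriv u = fun _ => (0:ℝ) := by
      rw [hueq]; funext x; exact deriv_const x c
    have hLHS : perNorm p (deriv u) = 0 := by
      rw [hder]
      unfold perNorm
      rw [show (∫ x in (0:ℝ)..(2 * π), |(0:ℝ)| ^ p) = 0 by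
        simp [Real.zero_rpow hp0.ne']]
      rw [mul_zero, Real.zero_rpow (by positivity)]
    have hubar' : ubar = c := by
      rw [hubar, hueq]
      simp only [intervalIntegral.integral_const, smul_eq_mul]
      have hcp : |c| ^ (p - 2) ≠ 0 := (rpow_pos_of_pos (abs_pos.2 hc0) _).ne'
      field_simp
    have hJ : (∫ x in (0:ℝ)..(2 * π), |u x| ^ (p - 2) * (u x - ubar) ^ 2) = 0 := by
      have : ∀ x, |u x| ^ (p - 2) * (u x - ubar) ^ 2 = 0 := fun x => by
        rw [hubar', hconst x]; ring
      simp only [this, intervalIntegral.integral_zero]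
    rw [hJ, hLHS]
    simp
  · push_neg at hconst
    obtain ⟨x₀, hx₀⟩ := hconst
    set v : ℝ → ℝ := fun x => u x - c with hv
    have hvcont : Continuous v := hucont.sub continuous_const
    have hvper : Function.Periodic v (2 * π) := fun x => by simp only [hv, huper x]
    have hvC1 : ContDiff ℝ 1 v := huC1.sub contDiff_const
    have hvne : v ≠ 0 := by
      intro h
      apply hx₀
      have := congrFun h x₀
      simpa [hv, sub_eq_zero] using this
    have hvint : (∫ x in (0:ℝ)..(2 * π), v x) = 0 := by
      simp only [hv]
      rw [intervalIntegral.integral_sub (hucont.intervalIntegrable _ _)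
        (intervalIntegrable_const)]
      rw [intervalIntegral.integral_const, smul_eq_mul, hc]
      field_simp
      ring
    have hderv : deriv v = deriv u := funext fun x => deriv_sub_const c
    -- positivity of ∫ |v|^p
    have hvppos : 0 < ∫ x in (0:ℝ)..(2 * π), |v x| ^ p := by
      apply per_int_pos (hvcont.abs.rpow_const fun x => Or.inr hp0.le)
        (fun x => rpow_nonneg (abs_nonneg _) _) (fun x => by simp only [hvper x])
      exact ⟨x₀, rpow_pos_of_pos (abs_pos.2 (sub_ne_zero.2 hx₀)) _⟩
    have hNpv_pos : 0 < perNorm p v := by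
      unfold perNorm
      exact rpow_pos_of_pos (by positivity) _
    -- lambdaOne ≤ Rayleigh quotient of v
    have hbdd : BddBelow { l : ℝ | ∃ v : ℝ → ℝ, PeriodicC1 v ∧ v ≠ 0 ∧
        (∫ x in (0:ℝ)..(2 * π), v x) = 0 ∧
        l = (perNorm p (deriv v)) ^ 2 / (perNorm p v) ^ 2 } := by
      refine ⟨0, ?_⟩
      rintro l ⟨v, -, -, -, rfl⟩
      positivity
    have hL1 : lambdaOne p ≤ (perNorm p (deriv u)) ^ 2 / (perNorm p v) ^ 2 := by
      rw [← hderv]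
      exact csInf_le hbdd ⟨v, ⟨hvper, hvC1⟩, hvne, hvint, rfl⟩
    -- integrals for the quadratic expansion
    have hInt1 : IntervalIntegrable (fun x => |u x| ^ (p - 2) * (u x) ^ 2) volume 0 (2 * π) :=
      (hwcont.mul (hucont.pow 2)).intervalIntegrable _ _
    have hInt2 : IntervalIntegrable (fun x => |u x| ^ (p - 2) * u x) volume 0 (2 * π) :=
      (hwcont.mul hucont).intervalIntegrable _ _
    have hInt3 : IntervalIntegrable (fun x => |u x| ^ (p - 2)) volume 0 (2 * π) :=
      hwcont.intervalIntegrable _ _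
    set Ia : ℝ := ∫ x in (0:ℝ)..(2 * π), |u x| ^ (p - 2) * (u x) ^ 2 with hIa
    set Ib : ℝ := ∫ x in (0:ℝ)..(2 * π), |u x| ^ (p - 2) * u x with hIb
    set Iw : ℝ := ∫ x in (0:ℝ)..(2 * π), |u x| ^ (p - 2) with hIw
    have hIwpos : 0 < Iw := by
      rw [hIw]
      apply per_int_pos hwcont hwnn hwper
      obtain ⟨x₁, hx₁⟩ := Function.ne_iff.1 hu0
      exact ⟨x₁, rpow_pos_of_pos (abs_pos.2 hx₁) _⟩
    have expand : ∀ t : ℝ, (∫ x in (0:ℝ)..(2 * π), |u x| ^ (p - 2) * (u x - t) ^ 2)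
        = Ia - 2 * t * Ib + t ^ 2 * Iw := by
      intro t
      have h1 : Set.EqOn (fun x => |u x| ^ (p - 2) * (u x - t) ^ 2)
          (fun x => (|u x| ^ (p - 2) * (u x) ^ 2 - (2 * t) * (|u x| ^ (p - 2) * u x))
            + t ^ 2 * |u x| ^ (p - 2)) (Set.uIcc 0 (2 * π)) := fun x _ => by ring
      rw [intervalIntegral.integral_congr h1,
        intervalIntegral.integral_add (hInt1.sub (hInt2.const_mul _)) (hInt3.const_mul _),
        intervalIntegral.integral_sub hInt1 (hInt2.const_mul _),
        intervalIntegral.integral_const_mul, intervalIntegral.integral_const_mul]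
    have hub : ubar * Iw = Ib := by
      rw [hubar]
      field_simp
    have hquad : (∫ x in (0:ℝ)..(2 * π), |u x| ^ (p - 2) * (u x - ubar) ^ 2)
        ≤ ∫ x in (0:ℝ)..(2 * π), |u x| ^ (p - 2) * (u x - c) ^ 2 := by
      rw [expand ubar, expand c, ← hub]
      nlinarith [mul_nonneg (sq_nonneg (c - ubar)) hIwpos.le]
    -- Hölder
    have hholder := holder_step p hp u v hucont hvcont
    -- identify perNorm powers
    have hTu : (0:ℝ) ≤ (1 / (2 * π)) * ∫ x in (0:ℝ)..(2 * π), |u x| ^ p := by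
      have : (0:ℝ) ≤ ∫ x in (0:ℝ)..(2 * π), |u x| ^ p :=
        intervalIntegral.integral_nonneg h2π.le fun x _ => rpow_nonneg (abs_nonneg _) _
      positivity
    have hTv : (0:ℝ) ≤ (1 / (2 * π)) * ∫ x in (0:ℝ)..(2 * π), |v x| ^ p := by
      have : (0:ℝ) ≤ ∫ x in (0:ℝ)..(2 * π), |v x| ^ p := hvppos.le
      positivity
    have hNpu : perNorm p u ^ (p - 2)
        = ((1 / (2 * π)) * ∫ x in (0:ℝ)..(2 * π), |u x| ^ p) ^ ((p - 2) / p) := by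
      unfold perNorm
      rw [← Real.rpow_mul hTu]
      congr 1
      field_simp
    have hNpv : perNorm p v ^ 2
        = ((1 / (2 * π)) * ∫ x in (0:ℝ)..(2 * π), |v x| ^ p) ^ (2 / p) := by
      have h2 : perNorm p v ^ 2 = perNorm p v ^ ((2:ℕ):ℝ) := (Real.rpow_natCast _ 2).symm
      rw [h2]
      unfold perNorm
      rw [← Real.rpow_mul hTv]
      congr 1
      push_cast
      ring
    have hholder' : (1 / (2 * π)) * (∫ x in (0:ℝ)..(2 * π), |u x| ^ (p - 2) * (u x - c) ^ 2)
        ≤ perNorm p u ^ (p - 2) * perNorm p v ^ 2 := by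
      rw [hNpu, hNpv]
      exact hholder
    -- final chain
    have hJc : (0:ℝ) ≤ (1 / (2 * π)) * ∫ x in (0:ℝ)..(2 * π), |u x| ^ (p - 2) * (u x - c) ^ 2 := by
      have : (0:ℝ) ≤ ∫ x in (0:ℝ)..(2 * π), |u x| ^ (p - 2) * (u x - c) ^ 2 :=
        intervalIntegral.integral_nonneg h2π.le fun x _ =>
          mul_nonneg (hwnn x) (sq_nonneg _)
      positivity
    rw [ge_iff_le]
    calc lambdaOne p * ((1 / (2 * π)) * ∫ x in (0:ℝ)..(2 * π), |u x| ^ (p - 2) * (u x - ubar) ^ 2)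
        ≤ lambdaOne p * ((1 / (2 * π)) * ∫ x in (0:ℝ)..(2 * π), |u x| ^ (p - 2) * (u x - c) ^ 2) := by
          apply mul_le_mul_of_nonneg_left _ hl0
          apply mul_le_mul_of_nonneg_left hquad (by positivity)
      _ ≤ ((perNorm p (deriv u)) ^ 2 / (perNorm p v) ^ 2)
            * ((1 / (2 * π)) * ∫ x in (0:ℝ)..(2 * π), |u x| ^ (p - 2) * (u x - c) ^ 2) :=
          mul_le_mul_of_nonneg_right hL1 hJc
      _ ≤ ((perNorm p (deriv u)) ^ 2 / (perNorm p v) ^ 2)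
            * (perNorm p u ^ (p - 2) * perNorm p v ^ 2) := by
          apply mul_le_mul_of_nonneg_left hholder' (by positivity)
      _ = (perNorm p (deriv u)) ^ 2 * perNorm p u ^ (p - 2) := by
          field_simp
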